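/- For integers $e \ge 1$ and $0 \le p \le e$, the sum $\sum_{i=\max(0,2p-e)}^{\min(2p,e)} (-1)^{p+i} \binom{2p}{i} \frac{(e!)^4}{((e-2p+i)!)^2((e-i)!)^2}$ is strictly positive. -/

import Mathlib

open Finset

/-- Binomial coefficient with integer lower index, as a rational. -/
def ch (n : ℕ) (z : ℤ) : ℚ := if 0 ≤ z then (n.choose z.toNat : ℚ) else 0

lemma ch_ofNat (n k : ℕ) : ch n (k : ℤ) = (n.choose k : ℚ) := by
  simp [ch]

lemma ch_neg (n : ℕ) {z : ℤ} (h : z < 0) : ch n z = 0 := by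
  simp [ch, not_le.mpr h]

lemma ch_gt (n : ℕ) {z : ℤ} (h : (n : ℤ) < z) : ch n z = 0 := by
  have h0 : 0 ≤ z := le_trans (Int.ofNat_nonneg n) h.le
  have : n < z.toNat := by omega
  simp [ch, h0, Nat.choose_eq_zero_of_lt this]

lemma ch_symm (n : ℕ) (z : ℤ) : ch n z = ch n ((n : ℤ) - z) := by
  rcases lt_or_ge z 0 with h | h
  · rw [ch_neg n h, ch_gt n (by omega)]
  rcases lt_or_ge (n : ℤ) z with h2 | h2
  · rw [ch_gt n h2, ch_neg n (by omega)]
  · lift z to ℕ using h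
    have hz : z ≤ n := by exact_mod_cast h2
    have : ((n : ℤ) - z) = ((n - z : ℕ) : ℤ) := by omega
    rw [this, ch_ofNat, ch_ofNat, Nat.choose_symm hz]

lemma ch_pascal (n : ℕ) (z : ℤ) : ch (n + 1) z = ch n z + ch n (z - 1) := by
  rcases lt_or_ge z 0 with h | h
  · rw [ch_neg _ h, ch_neg n h, ch_neg n (by omega)]; ring
  · lift z to ℕ using h
    cases z with
    | zero =>
        have h1 : ((0:ℕ):ℤ) - 1 = -1 := by norm_num
        rw [h1, ch_neg n (show (-1:ℤ) < 0 by norm_num)]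
        simp [ch]
    | succ k =>
        have : ((k + 1 : ℕ) : ℤ) - 1 = (k : ℤ) := by omega
        rw [this, ch_ofNat, ch_ofNat, ch_ofNat, Nat.choose_succ_succ' (n := n) (k := k)]
        push_cast; ring

lemma ch_vandermonde (a b : ℕ) (z : ℤ) :
    ∑ u ∈ range (a + 1), (a.choose u : ℚ) * ch b (z - u) = ch (a + b) z := by
  induction a generalizing z with
  | zero => simp
  | succ a ih =>
      have key : ∀ w : ℤ, ∑ u ∈ range (a + 2), ((a+1).choose u : ℚ) * ch b (w - u)
          = (∑ u ∈ range (a + 1), (a.choose u : ℚ) * ch b (w - u))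
            + ∑ u ∈ range (a + 1), (a.choose u : ℚ) * ch b ((w - 1) - u) := by
        intro w
        rw [Finset.sum_range_succ' (fun u => ((a+1).choose u : ℚ) * ch b (w - u)) (a+1)]
        have h1 : ∀ u, ((a+1).choose (u+1) : ℚ) = (a.choose u : ℚ) + (a.choose (u+1) : ℚ) := by
          intro u; exact_mod_cast congrArg (Nat.cast (R := ℚ)) (Nat.choose_succ_succ' a u)
        calc (∑ u ∈ range (a + 1), ((a+1).choose (u+1) : ℚ) * ch b (w - (u+1)))
              + ((a+1).choose 0 : ℚ) * ch b (w - 0)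
            = ((∑ u ∈ range (a + 1), (a.choose (u+1) : ℚ) * ch b (w - (u+1)))
                + (a.choose 0 : ℚ) * ch b (w - 0))
              + ∑ u ∈ range (a + 1), (a.choose u : ℚ) * ch b ((w-1) - u) := by
              rw [Finset.sum_congr rfl (fun u _ => by rw [h1 u])]
              rw [Finset.sum_congr rfl (fun (u : ℕ) (_ : u ∈ range (a+1)) =>
                (by push_cast; ring_nf :
                  ((a.choose u : ℚ) + (a.choose (u+1) : ℚ)) * ch b (w - (u+1))
                    = (a.choose (u+1) : ℚ) * ch b (w - (u+1))
                      + (a.choose u : ℚ) * ch b (w - (u+1))))]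
              rw [Finset.sum_add_distrib]
              simp only [Nat.choose_zero_right]
              have : ∀ u : ℕ, w - (↑u + 1) = (w - 1) - u := by intro u; ring
              simp only [show ∀ u : ℕ, w - ((u:ℤ) + 1) = (w - 1) - u from fun u => by ring]
              push_cast
              ring
          _ = (∑ u ∈ range (a + 2), (a.choose u : ℚ) * ch b (w - u))
              + ∑ u ∈ range (a + 1), (a.choose u : ℚ) * ch b ((w-1) - u) := by
              rw [Finset.sum_range_succ' (fun u => (a.choose u : ℚ) * ch b (w - u)) (a+1)]
              push_cast; ring_nf
          _ = _ := by
              rw [Finset.sum_range_succ]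
              simp [Nat.choose_succ_self]
      rw [key z, ih z, ih (z - 1)]
      have : a + 1 + b = (a + b) + 1 := by omega
      rw [this, ch_pascal]

lemma chInnerSum (p q j k : ℕ) (hj : j ≤ p) (hk : k ≤ p) :
    ∑ s ∈ range (p + q + 1), ch q ((s : ℤ) + j - p) * ch q ((s : ℤ) + k - p)
      = ch (2 * q) ((q : ℤ) + j - k) := by
  have hsub : Finset.Icc (p - j) (p - j + q) ⊆ range (p + q + 1) := by
    intro x hx
    simp only [Finset.mem_Icc] at hx
    simp only [Finset.mem_range]
    omega
  rw [← Finset.sum_subset hsub (by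
    intro x hx hnx
    simp only [Finset.mem_Icc, not_and, not_le] at hnx
    simp only [Finset.mem_range] at hx
    rcases lt_or_ge x (p - j) with h | h
    · rw [ch_neg q (show (x : ℤ) + j - p < 0 by omega)]; ring
    · rw [ch_gt q (show (q : ℤ) < (x : ℤ) + j - p by omega)]; ring)]
  rw [← Finset.Ico_add_one_right_eq_Icc, Finset.sum_Ico_eq_sum_range]
  have hlen : p - j + q + 1 - (p - j) = q + 1 := by omega
  rw [hlen]
  have hterm : ∀ u ∈ range (q + 1),
      ch q (((p - j + u : ℕ) : ℤ) + j - p) * ch q (((p - j + u : ℕ) : ℤ) + k - p)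
        = (q.choose u : ℚ) * ch q (((q : ℤ) + j - k) - u) := by
    intro u _
    have h1 : ((p - j + u : ℕ) : ℤ) + j - p = (u : ℤ) := by omega
    have h2 : ((p - j + u : ℕ) : ℤ) + k - p = (u : ℤ) + k - j := by omega
    rw [h1, h2, ch_ofNat, ch_symm q ((u : ℤ) + k - j)]
    congr 2
    ring
  rw [Finset.sum_congr rfl hterm, ch_vandermonde q q ((q : ℤ) + j - k), two_mul]

lemma L1 (p q : ℕ) :
    ∑ i ∈ range (2 * p + 1),
        (-1 : ℚ) ^ (p + i) * ((2 * p).choose i : ℚ) * (ch (2 * q) ((p : ℤ) + q - i)) ^ 2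
      = ∑ j ∈ range (p + 1), ∑ k ∈ range (p + 1),
          (-1 : ℚ) ^ (p + j + k) * (p.choose j : ℚ) * (p.choose k : ℚ) *
            (ch (2 * q) ((p : ℤ) + q - j - k)) ^ 2 := by
  have hv : ∀ i : ℕ, ((2 * p).choose i : ℚ)
      = ∑ j ∈ range (p + 1), (p.choose j : ℚ) * ch p ((i : ℤ) - j) := by
    intro i
    rw [ch_vandermonde p p i, ← two_mul, ch_ofNat]
  calc ∑ i ∈ range (2 * p + 1),
        (-1 : ℚ) ^ (p + i) * ((2 * p).choose i : ℚ) * (ch (2 * q) ((p : ℤ) + q - i)) ^ 2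
      = ∑ i ∈ range (2 * p + 1), ∑ j ∈ range (p + 1),
          (-1 : ℚ) ^ (p + i) * ((p.choose j : ℚ) * ch p ((i : ℤ) - j)) *
            (ch (2 * q) ((p : ℤ) + q - i)) ^ 2 := by
        apply Finset.sum_congr rfl
        intro i _
        rw [hv i, Finset.mul_sum, Finset.sum_mul]
    _ = ∑ j ∈ range (p + 1), ∑ i ∈ range (2 * p + 1),
          (-1 : ℚ) ^ (p + i) * ((p.choose j : ℚ) * ch p ((i : ℤ) - j)) *
            (ch (2 * q) ((p : ℤ) + q - i)) ^ 2 := Finset.sum_comm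
    _ = _ := by
        apply Finset.sum_congr rfl
        intro j hj
        simp only [Finset.mem_range] at hj
        have hjp : j ≤ p := by omega
        have hsub : Finset.Icc j (j + p) ⊆ range (2 * p + 1) := by
          intro x hx
          simp only [Finset.mem_Icc] at hx
          simp only [Finset.mem_range]
          omega
        rw [← Finset.sum_subset hsub (by
          intro x hx hnx
          simp only [Finset.mem_Icc, not_and, not_le] at hnx
          rcases lt_or_ge x j with h | h
          · rw [ch_neg p (show (x : ℤ) - j < 0 by omega)]; ring
          · rw [ch_gt p (show (p : ℤ) < (x : ℤ) - j by omega)]; ring)]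
        rw [← Finset.Ico_add_one_right_eq_Icc, Finset.sum_Ico_eq_sum_range]
        have hlen : j + p + 1 - j = p + 1 := by omega
        rw [hlen]
        apply Finset.sum_congr rfl
        intro k _
        have h1 : ((j + k : ℕ) : ℤ) - j = (k : ℤ) := by omega
        have h2 : (p : ℤ) + q - ((j + k : ℕ) : ℤ) = (p : ℤ) + q - j - k := by
          push_cast; ring
        have h3 : p + (j + k) = p + j + k := by omega
        rw [h1, h2, h3, ch_ofNat]
        ring

lemma L2 (p q : ℕ) :
    ∑ s ∈ range (p + q + 1), ∑ t ∈ range (p + q + 1),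
        (∑ j ∈ range (p + 1), (-1 : ℚ) ^ j * (p.choose j : ℚ) *
          (ch q ((s : ℤ) + j - p) * ch q ((t : ℤ) + j - p))) ^ 2
      = ∑ j ∈ range (p + 1), ∑ k ∈ range (p + 1),
          (-1 : ℚ) ^ (j + k) * (p.choose j : ℚ) * (p.choose k : ℚ) *
            (ch (2 * q) ((q : ℤ) + j - k)) ^ 2 := by
  have expand : ∀ s t : ℕ,
      (∑ j ∈ range (p + 1), (-1 : ℚ) ^ j * (p.choose j : ℚ) *
          (ch q ((s : ℤ) + j - p) * ch q ((t : ℤ) + j - p))) ^ 2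
        = ∑ j ∈ range (p + 1), ∑ k ∈ range (p + 1),
            ((-1 : ℚ) ^ (j + k) * (p.choose j : ℚ) * (p.choose k : ℚ)) *
              ((ch q ((s : ℤ) + j - p) * ch q ((s : ℤ) + k - p)) *
                (ch q ((t : ℤ) + j - p) * ch q ((t : ℤ) + k - p))) := by
    intro s t
    rw [sq, Finset.sum_mul_sum]
    apply Finset.sum_congr rfl; intro j _
    apply Finset.sum_congr rfl; intro k _
    rw [pow_add]; ring
  calc ∑ s ∈ range (p + q + 1), ∑ t ∈ range (p + q + 1),
        (∑ j ∈ range (p + 1), (-1 : ℚ) ^ j * (p.choose j : ℚ) *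
          (ch q ((s : ℤ) + j - p) * ch q ((t : ℤ) + j - p))) ^ 2
      = ∑ st ∈ range (p + q + 1) ×ˢ range (p + q + 1), ∑ jk ∈ range (p + 1) ×ˢ range (p + 1),
          ((-1 : ℚ) ^ (jk.1 + jk.2) * (p.choose jk.1 : ℚ) * (p.choose jk.2 : ℚ)) *
            ((ch q ((st.1 : ℤ) + jk.1 - p) * ch q ((st.1 : ℤ) + jk.2 - p)) *
              (ch q ((st.2 : ℤ) + jk.1 - p) * ch q ((st.2 : ℤ) + jk.2 - p))) := by
        rw [Finset.sum_product]
        apply Finset.sum_congr rfl; intro s _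
        apply Finset.sum_congr rfl; intro t _
        rw [expand s t, Finset.sum_product]
    _ = ∑ jk ∈ range (p + 1) ×ˢ range (p + 1), ∑ st ∈ range (p + q + 1) ×ˢ range (p + q + 1),
          ((-1 : ℚ) ^ (jk.1 + jk.2) * (p.choose jk.1 : ℚ) * (p.choose jk.2 : ℚ)) *
            ((ch q ((st.1 : ℤ) + jk.1 - p) * ch q ((st.1 : ℤ) + jk.2 - p)) *
              (ch q ((st.2 : ℤ) + jk.1 - p) * ch q ((st.2 : ℤ) + jk.2 - p))) := Finset.sum_comm
    _ = _ := by
        simp only [Finset.sum_product]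
        apply Finset.sum_congr rfl; intro j hj
        apply Finset.sum_congr rfl; intro k hk
        simp only [Finset.mem_range] at hj hk
        have hjp : j ≤ p := by omega
        have hkp : k ≤ p := by omega
        calc ∑ s ∈ range (p + q + 1), ∑ t ∈ range (p + q + 1),
              ((-1 : ℚ) ^ (j + k) * (p.choose j : ℚ) * (p.choose k : ℚ)) *
                ((ch q ((s : ℤ) + j - p) * ch q ((s : ℤ) + k - p)) *
                  (ch q ((t : ℤ) + j - p) * ch q ((t : ℤ) + k - p))) = 
            ((-1 : ℚ) ^ (j + k) * (p.choose j : ℚ) * (p.choose k : ℚ)) *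
              ((∑ s ∈ range (p + q + 1), ch q ((s : ℤ) + j - p) * ch q ((s : ℤ) + k - p)) *
                (∑ t ∈ range (p + q + 1), ch q ((t : ℤ) + j - p) * ch q ((t : ℤ) + k - p))) := by
              rw [Finset.sum_mul_sum, Finset.mul_sum]
              apply Finset.sum_congr rfl; intro s _
              rw [Finset.mul_sum]
          _ = _ := by
              rw [chInnerSum p q j k hjp hkp]
              ring

lemma L3 (p q : ℕ) :
    ∑ j ∈ range (p + 1), ∑ k ∈ range (p + 1),
        (-1 : ℚ) ^ (j + k) * (p.choose j : ℚ) * (p.choose k : ℚ) *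
          (ch (2 * q) ((q : ℤ) + j - k)) ^ 2
      = ∑ j ∈ range (p + 1), ∑ k ∈ range (p + 1),
          (-1 : ℚ) ^ (p + j + k) * (p.choose j : ℚ) * (p.choose k : ℚ) *
            (ch (2 * q) ((p : ℤ) + q - j - k)) ^ 2 := by
  rw [← Finset.sum_range_reflect (fun j => ∑ k ∈ range (p + 1),
      (-1 : ℚ) ^ (j + k) * (p.choose j : ℚ) * (p.choose k : ℚ) *
        (ch (2 * q) ((q : ℤ) + j - k)) ^ 2) (p + 1)]
  apply Finset.sum_congr rfl
  intro j hj
  simp only [Finset.mem_range] at hj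
  have hjp : j ≤ p := by omega
  have hidx : p + 1 - 1 - j = p - j := by omega
  rw [hidx]
  apply Finset.sum_congr rfl
  intro k _
  have h1 : (-1 : ℚ) ^ (p + j + k) = (-1 : ℚ) ^ (p - j + k) := by
    rw [show p + j + k = (p - j + k) + 2 * j by omega, pow_add]
    simp [pow_mul]
  have h2 : ((p - j : ℕ) : ℤ) = (p : ℤ) - j := by omega
  rw [h1, Nat.choose_symm hjp, h2]
  have h3 : (q : ℤ) + ((p : ℤ) - j) - k = (p : ℤ) + q - j - k := by ring
  rw [h3]

theorem stmt_2 (e p : ℕ) (he : 1 ≤ e) (hp : p ≤ e) :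
    0 < ∑ i ∈ Finset.Icc (2 * p - e) (min (2 * p) e),
      ((-1 : ℚ) ^ (p + i) * (Nat.choose (2 * p) i : ℚ) * (Nat.factorial e : ℚ) ^ 4 /
        ((Nat.factorial (e + i - 2 * p) : ℚ) ^ 2 * (Nat.factorial (e - i) : ℚ) ^ 2)) := by
  obtain ⟨q, rfl⟩ : ∃ q, e = p + q := ⟨e - p, by omega⟩
  set K : ℚ := ((p + q).factorial : ℚ) ^ 4 / ((2 * q).factorial : ℚ) ^ 2 with hK
  have hKpos : 0 < K := by
    apply div_pos <;> positivity
  have hsub : Finset.Icc (2 * p - (p + q)) (min (2 * p) (p + q)) ⊆ range (2 * p + 1) := by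
    intro x hx
    simp only [Finset.mem_Icc] at hx
    simp only [Finset.mem_range]
    omega
  have hstep1 : ∑ i ∈ Finset.Icc (2 * p - (p + q)) (min (2 * p) (p + q)),
      ((-1 : ℚ) ^ (p + i) * (Nat.choose (2 * p) i : ℚ) * (Nat.factorial (p + q) : ℚ) ^ 4 /
        ((Nat.factorial (p + q + i - 2 * p) : ℚ) ^ 2 * (Nat.factorial (p + q - i) : ℚ) ^ 2))
      = K * ∑ i ∈ range (2 * p + 1),
          (-1 : ℚ) ^ (p + i) * ((2 * p).choose i : ℚ) * (ch (2 * q) ((p : ℤ) + q - i)) ^ 2 := by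
    rw [Finset.mul_sum]
    rw [← Finset.sum_subset hsub (by
      intro x hx hnx
      simp only [Finset.mem_range] at hx
      simp only [Finset.mem_Icc, not_and, not_le] at hnx
      rcases lt_or_ge x (2 * p - (p + q)) with h | h
      · rw [ch_gt (2 * q) (show ((2 * q : ℕ) : ℤ) < (p : ℤ) + q - x by push_cast; omega)]
        ring
      · have : min (2 * p) (p + q) < x := hnx h
        rw [ch_neg (2 * q) (show (p : ℤ) + q - x < 0 by push_cast; omega)]
        ring)]
    apply Finset.sum_congr rfl
    intro i hi
    simp only [Finset.mem_Icc] at hi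
    have hi1 : i ≤ p + q := by omega
    have hi3 : 2 * p ≤ i + (p + q) := by omega
    have hch : ch (2 * q) ((p : ℤ) + q - i) = ((2 * q).choose (p + q - i) : ℚ) := by
      have harg : (p : ℤ) + q - i = ((p + q - i : ℕ) : ℤ) := by omega
      rw [harg, ch_ofNat]
    have hle : p + q - i ≤ 2 * q := by omega
    rw [hch, Nat.cast_choose ℚ hle]
    have h2 : 2 * q - (p + q - i) = p + q + i - 2 * p := by omega
    rw [h2]
    have hA : ((p + q + i - 2 * p).factorial : ℚ) ≠ 0 := by
      exact_mod_cast (Nat.factorial_pos _).ne'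
    have hB : ((p + q - i).factorial : ℚ) ≠ 0 := by
      exact_mod_cast (Nat.factorial_pos _).ne'
    have hC : (((2 * q)).factorial : ℚ) ≠ 0 := by
      exact_mod_cast (Nat.factorial_pos _).ne'
    rw [hK]
    field_simp
  rw [hstep1, L1, ← L3, ← L2]
  apply mul_pos hKpos
  apply Finset.sum_pos'
  · intro s _
    exact Finset.sum_nonneg (fun t _ => sq_nonneg _)
  · refine ⟨p + q, by simp, ?_⟩
    apply Finset.sum_pos'
    · intro t _
      exact sq_nonneg _
    · refine ⟨p, by simp [Finset.mem_range], ?_⟩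
      have hE : (∑ j ∈ range (p + 1), (-1 : ℚ) ^ j * (p.choose j : ℚ) *
          (ch q (((p + q : ℕ) : ℤ) + j - p) * ch q (((p : ℕ) : ℤ) + j - p))) = 1 := by
        rw [Finset.sum_eq_single_of_mem 0 (by simp)]
        · have h1 : ((p + q : ℕ) : ℤ) + (0 : ℕ) - p = ((q : ℕ) : ℤ) := by push_cast; ring
          have h2 : ((p : ℕ) : ℤ) + (0 : ℕ) - p = ((0 : ℕ) : ℤ) := by push_cast; ring
          rw [h1, h2, ch_ofNat, ch_ofNat]
          simp
        · intro j _ hne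
          rw [ch_gt q (show (q : ℤ) < ((p + q : ℕ) : ℤ) + j - p by push_cast; omega)]
          ring
      rw [hE]
      norm_num
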